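/- Let $F$ be a field and $v_1,\dots,v_5 \in F^3$ such that all $3\times 3$ determinants $\Delta_{abc} = \det(v_a,v_b,v_c)$ for distinct $a,b,c \in \{1,\dots,5\}$ are nonzero. Then the four-term $(3,5)$ decoupling identity holds: $\mathrm{PT}^{(3)}(1,2,3,4,5) + \mathrm{PT}^{(3)}(1,2,5,4,3) - \mathrm{PT}^{(3)}(1,3,2,5,4) + \mathrm{PT}^{(3)}(1,4,3,2,5) = 0$. (This is the $(3,5)$ analog of the four-term $U(1)$ decoupling identity.) -/

import Mathlib

/-- `Δ_{abc}`: the determinant of the `3 × 3` matrix whose columns are `v a`, `v b`, `v c`. -/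
def Δ3 {F : Type*} [Field F] {N : ℕ} (v : Fin N → Fin 3 → F) (a b c : Fin N) : F :=
  Matrix.det (Matrix.of fun i j => ![v a, v b, v c] j i)

/-- The `k = 3` Parke-Taylor factor
`PT^(3)(a₁,…,a₅) = (Δ_{a₁a₂a₃} Δ_{a₂a₃a₄} Δ_{a₃a₄a₅} Δ_{a₄a₅a₁} Δ_{a₅a₁a₂})⁻¹`. -/
noncomputable def PT3 {F : Type*} [Field F] (v : Fin 5 → Fin 3 → F)
    (a1 a2 a3 a4 a5 : Fin 5) : F :=
  (Δ3 v a1 a2 a3 * Δ3 v a2 a3 a4 * Δ3 v a3 a4 a5 * Δ3 v a4 a5 a1 * Δ3 v a5 a1 a2)⁻¹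


private lemma pt35_aux {F : Type*} [Field F] (a b c d e f g h : F) (ha : a ≠ 0) (hb : b ≠ 0)
    (hc : c ≠ 0) (hd : d ≠ 0) (he : e ≠ 0) (hf : f ≠ 0) (hg : g ≠ 0) (hh : h ≠ 0)
    (key : c * f * g = d * e * f + b * e * h + a * g * h) :
    (a * e * h * d * b)⁻¹ + (b * -g * -h * -c * a)⁻¹ - (-a * -f * -g * -d * c)⁻¹ +
      (-c * -e * -f * b * d)⁻¹ = 0 := by
  have hP : a * b * c * d * e * f * g * h ≠ 0 := by
    simp [ha, hb, hc, hd, he, hf, hg, hh, mul_ne_zero]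
  have h1 : (a * e * h * d * b)⁻¹ = c * f * g / (a * b * c * d * e * f * g * h) := by
    rw [eq_div_iff hP, inv_mul_eq_iff_eq_mul₀ (by simp [ha, hb, hd, he, hh, mul_ne_zero])]
    ring
  have h2 : (b * -g * -h * -c * a)⁻¹ = -(d * e * f) / (a * b * c * d * e * f * g * h) := by
    rw [eq_div_iff hP, inv_mul_eq_iff_eq_mul₀ (by simp [ha, hb, hc, hg, hh, mul_ne_zero])]
    ring
  have h3 : (-a * -f * -g * -d * c)⁻¹ = b * e * h / (a * b * c * d * e * f * g * h) := by
    rw [eq_div_iff hP, inv_mul_eq_iff_eq_mul₀ (by simp [ha, hc, hd, hf, hg, mul_ne_zero])]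
    ring
  have h4 : (-c * -e * -f * b * d)⁻¹ = -(a * g * h) / (a * b * c * d * e * f * g * h) := by
    rw [eq_div_iff hP, inv_mul_eq_iff_eq_mul₀ (by simp [hb, hc, hd, he, hf, mul_ne_zero])]
    ring
  rw [h1, h2, h3, h4, ← add_div, ← sub_div, ← add_div, div_eq_zero_iff]
  left
  linear_combination key

/-- The four-term `(3,5)` decoupling identity (labels `1, …, 5` correspond to `0, …, 4`):
`PT(1,2,3,4,5) + PT(1,2,5,4,3) - PT(1,3,2,5,4) + PT(1,4,3,2,5) = 0`. -/
theorem stmt10 {F : Type*} [Field F] (v : Fin 5 → Fin 3 → F)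
    (hΔ : ∀ a b c : Fin 5, a ≠ b → a ≠ c → b ≠ c → Δ3 v a b c ≠ 0) :
    PT3 v 0 1 2 3 4 + PT3 v 0 1 4 3 2 - PT3 v 0 2 1 4 3 + PT3 v 0 3 2 1 4 = 0 := by
  have sw : ∀ a b c : Fin 5, Δ3 v b a c = -Δ3 v a b c := by
    intro a b c; simp [Δ3, Matrix.det_fin_three]; ring
  have sw23 : ∀ a b c : Fin 5, Δ3 v a c b = -Δ3 v a b c := by
    intro a b c; simp [Δ3, Matrix.det_fin_three]; ring
  have rev : ∀ a b c : Fin 5, Δ3 v c b a = -Δ3 v a b c := by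
    intro a b c; simp [Δ3, Matrix.det_fin_three]; ring
  have cyc : ∀ a b c : Fin 5, Δ3 v b c a = Δ3 v a b c := by
    intro a b c; simp [Δ3, Matrix.det_fin_three]; ring
  have cyc' : ∀ a b c : Fin 5, Δ3 v c a b = Δ3 v a b c := by
    intro a b c; simp [Δ3, Matrix.det_fin_three]; ring
  have key : Δ3 v 0 2 3 * Δ3 v 1 2 4 * Δ3 v 1 3 4 =
      Δ3 v 0 3 4 * Δ3 v 1 2 3 * Δ3 v 1 2 4 + Δ3 v 0 1 4 * Δ3 v 1 2 3 * Δ3 v 2 3 4 +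
      Δ3 v 0 1 2 * Δ3 v 1 3 4 * Δ3 v 2 3 4 := by
    simp [Δ3, Matrix.det_fin_three]; ring
  have h012 := hΔ 0 1 2 (by decide) (by decide) (by decide)
  have h014 := hΔ 0 1 4 (by decide) (by decide) (by decide)
  have h023 := hΔ 0 2 3 (by decide) (by decide) (by decide)
  have h034 := hΔ 0 3 4 (by decide) (by decide) (by decide)
  have h123 := hΔ 1 2 3 (by decide) (by decide) (by decide)
  have h124 := hΔ 1 2 4 (by decide) (by decide) (by decide)
  have h134 := hΔ 1 3 4 (by decide) (by decide) (by decide)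
  have h234 := hΔ 2 3 4 (by decide) (by decide) (by decide)
  simp only [PT3]
  rw [cyc 0 3 4, cyc' 0 1 4, sw23 1 3 4, rev 2 3 4, rev 0 2 3, cyc' 0 1 2,
      sw23 0 1 2, sw 1 2 4, rev 0 3 4, cyc' 0 2 3, sw23 0 2 3, rev 1 2 3,
      cyc 0 1 4, cyc' 0 3 4]
  exact pt35_aux _ _ _ _ _ _ _ _ h012 h014 h023 h034 h123 h124 h134 h234 key
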